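/- Let o be the ring of integers of a non-archimedean local field with residue cardinality q, let n ≥ 1, 0 ≤ l < n, and n − l ≤ r ≤ l. Then for α ∈ o, the condition α(α + ϖ^r) ∈ ϖ^{n+r−l}o is equivalent to α ∈ ϖ^{⌈(n+r−l)/2⌉}o. Consequently |{α ∈ o/ϖ^n o : α(α+ϖ^r) ∈ ϖ^{n+r−l}o}| = q^{n − ⌈(n+r−l)/2⌉} = q^{⌊(n+l−r)/2⌋}. -/

import Mathlib

/-- For `n ≥ 1`, `l < n` and `n - l ≤ r ≤ l`, the condition `α(α+ϖ^r) ∈ ϖ^{n+r-l} o` is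
equivalent to `α ∈ ϖ^{⌈(n+r-l)/2⌉} o`; consequently the number of such `α` in `o/ϖ^n o`
equals `q^{n-⌈(n+r-l)/2⌉} = q^{⌊(n+l-r)/2⌋}`. -/
theorem stmt_18 (o : Type*) [CommRing o] [IsDomain o] [IsDiscreteValuationRing o]
    (ϖ : o) (hϖ : Irreducible ϖ) (q : ℕ) (hq0 : 0 < q)
    (hq : Nat.card (o ⧸ Ideal.span {ϖ}) = q)
    (n l r : ℕ) (hn : 1 ≤ n) (hl : l < n) (hrl : n ≤ r + l) (hr : r ≤ l) :
    (∀ a : o, a * (a + ϖ ^ r) ∈ Ideal.span {ϖ ^ (n + r - l)} ↔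
        a ∈ Ideal.span {ϖ ^ ((n + r - l + 1) / 2)}) ∧
    (Nat.card {α : o ⧸ Ideal.span {ϖ ^ n} //
        ∃ a : o, Ideal.Quotient.mk (Ideal.span {ϖ ^ n}) a = α ∧
          a * (a + ϖ ^ r) ∈ Ideal.span {ϖ ^ (n + r - l)}}
      = q ^ (n - (n + r - l + 1) / 2) ∧
     Nat.card {α : o ⧸ Ideal.span {ϖ ^ n} //
        ∃ a : o, Ideal.Quotient.mk (Ideal.span {ϖ ^ n}) a = α ∧
          a * (a + ϖ ^ r) ∈ Ideal.span {ϖ ^ (n + r - l)}}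
      = q ^ ((n + l - r) / 2)) := by
  have hϖ0 : ϖ ≠ 0 := hϖ.ne_zero
  set m := n + r - l with hm
  set k := (m + 1) / 2 with hk
  have hkr : k ≤ r := by omega
  have hkn : k ≤ n := by omega
  have hm2k : m ≤ 2 * k := by omega
  -- key equivalence
  have key : ∀ a : o, a * (a + ϖ ^ r) ∈ Ideal.span {ϖ ^ m} ↔
      a ∈ Ideal.span {ϖ ^ k} := by
    intro a
    rw [Ideal.mem_span_singleton, Ideal.mem_span_singleton]
    constructor
    · intro h
      by_cases ha : a = 0
      · simp [ha]
      obtain ⟨t, u, rfl⟩ := IsDiscreteValuationRing.eq_unit_mul_pow_irreducible ha hϖ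
      rw [Units.dvd_mul_left]
      by_contra hnd
      have htk : t < k := by
        by_contra ht
        exact hnd (pow_dvd_pow ϖ (not_lt.1 ht))
      have htr : t < r := lt_of_lt_of_le htk hkr
      have h1 : ¬ IsUnit ((ϖ : o) ^ (r - t)) := fun hc =>
        hϖ.not_isUnit ((isUnit_pow_iff (show r - t ≠ 0 by omega)).mp hc)
      have hw : IsUnit ((u : o) + ϖ ^ (r - t)) := by
        by_contra hw
        have h2 : ((u : o) + ϖ ^ (r - t)) + (-(ϖ ^ (r - t))) ∈ nonunits o :=
          IsLocalRing.nonunits_add hw (by simpa using h1)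
        simp only [add_neg_cancel_right, mem_nonunits_iff] at h2
        exact h2 u.isUnit
      have heq : (u : o) * ϖ ^ t * ((u : o) * ϖ ^ t + ϖ ^ r)
          = ϖ ^ (2 * t) * ((u : o) * ((u : o) + ϖ ^ (r - t))) := by
        have : (ϖ : o) ^ r = ϖ ^ t * ϖ ^ (r - t) := by
          rw [← pow_add]; congr 1; omega
        rw [this, two_mul, pow_add]; ring
      rw [heq, (u.isUnit.mul hw).dvd_mul_right] at h
      have := (pow_dvd_pow_iff hϖ0 hϖ.not_isUnit).mp h
      omega
    · rintro ⟨c, rfl⟩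
      refine (pow_dvd_pow ϖ hm2k).trans ⟨c * (c + ϖ ^ (r - k)), ?_⟩
      have : (ϖ : o) ^ r = ϖ ^ k * ϖ ^ (r - k) := by
        rw [← pow_add]; congr 1; omega
      rw [this, two_mul, pow_add]; ring
  refine ⟨key, ?_⟩
  -- cardinality of quotients
  have hprime : (Ideal.span {ϖ} : Ideal o).IsPrime :=
    (Ideal.span_singleton_prime hϖ0).mpr hϖ.prime
  have hbot : (Ideal.span {ϖ} : Ideal o) ≠ ⊥ := by
    simp [Ideal.span_singleton_eq_bot, hϖ0]
  have hcard : ∀ j : ℕ, Nat.card (o ⧸ Ideal.span {ϖ ^ j}) = q ^ j := by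
    intro j
    rw [← Ideal.span_singleton_pow, ← Submodule.cardQuot_apply,
      cardQuot_pow_of_prime hbot, Submodule.cardQuot_apply, hq]
  -- the subtype as the image ideal
  set J : Ideal o := Ideal.span {ϖ ^ n} with hJ
  set I : Ideal o := Ideal.span {ϖ ^ k} with hI
  have hJI : J ≤ I :=
    Ideal.span_singleton_le_span_singleton.mpr (pow_dvd_pow ϖ hkn)
  have hsub : Nat.card {α : o ⧸ J //
      ∃ a : o, Ideal.Quotient.mk J a = α ∧
        a * (a + ϖ ^ r) ∈ Ideal.span {ϖ ^ m}}
      = Nat.card (Submodule.map J.mkQ I) := by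
    apply Nat.card_congr
    apply Equiv.subtypeEquivRight
    intro α
    simp only [Submodule.mem_map]
    constructor
    · rintro ⟨a, rfl, h⟩
      exact ⟨a, (key a).mp h, rfl⟩
    · rintro ⟨a, hmem, rfl⟩
      exact ⟨a, rfl, (key a).mpr hmem⟩
  have hmul := Submodule.card_quotient_mul_card_quotient I J hJI
  rw [show (o ⧸ (I : Submodule o o)) = (o ⧸ I) from rfl] at hmul
  have hcI : Nat.card (o ⧸ I) = q ^ k := hcard k
  have hcJ : Nat.card (o ⧸ J) = q ^ n := hcard n
  have hIm : Nat.card (Submodule.map J.mkQ I) = q ^ (n - k) := by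
    have : Nat.card (Submodule.map J.mkQ I) * q ^ k = q ^ n := by
      rw [← hcI, ← hcJ]; exact hmul
    have hqk : 0 < q ^ k := pow_pos hq0 k
    refine Nat.eq_of_mul_eq_mul_right hqk ?_
    rw [this, ← pow_add]
    congr 1; omega
  rw [hsub, hIm]
  constructor
  · rfl
  · congr 1; omega
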